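/- Suppose q is even and P = (1, τ^{q^2}, τ^{2q^2}). For every point (x,y,z) of the subplane PG(2,q) (x,y,z ∈ GF(q) not all zero), the line joining (x,y,z) to P meets the line ℓ = [-ττ^q, τ+τ^q, -1] in a point E + θE^q with θ^{q^2+q+1} = 1 = -1; hence (for q even) the projection of PG(2,q) from P onto ℓ equals the exterior splash {E + θE^q : θ^{q^2+q+1} = -1} of PG(2,q) onto ℓ. -/

import Mathlib

open Matrix
open Polynomial


/-- root-counting helper -/
lemma card_filter_le_natDegree (F : Type) [Field F] [Fintype F] [DecidableEq F]
    (p : Polynomial F) (hp : p ≠ 0) (P : F → Prop) [DecidablePred P]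
    (h : ∀ w, P w → p.eval w = 0) :
    (Finset.univ.filter P).card ≤ p.natDegree := by
  calc (Finset.univ.filter P).card ≤ p.roots.toFinset.card := by
        apply Finset.card_le_card
        intro w hw
        simp only [Finset.mem_filter] at hw
        simp only [Multiset.mem_toFinset, mem_roots, hp, IsRoot.def, ne_eq, not_false_iff, true_and]
        exact h w hw.2
    _ ≤ Multiset.card p.roots := p.roots.toFinset_card_le
    _ ≤ p.natDegree := p.card_roots'

lemma fixedField (k F : Type) [Field k] [Field F] [Algebra k F] [Fintype k] [Fintype F]
    (q : ℕ) (hq : 2 ≤ q) (hk : Fintype.card k = q) (w : F) (hw : w ^ q = w) :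
    ∃ c : k, algebraMap k F c = w := by
  classical
  set T : Finset F := Finset.univ.image (algebraMap k F) with hT
  have hTcard : T.card = q := by
    rw [hT, Finset.card_image_of_injective _ (algebraMap k F).injective, Finset.card_univ, hk]
  set S : Finset F := Finset.univ.filter (fun w => w ^ q = w) with hS
  have hTS : T ⊆ S := by
    intro a ha
    simp only [hT, Finset.mem_image] at ha
    obtain ⟨c, -, rfl⟩ := ha
    simp only [hS, Finset.mem_filter, Finset.mem_univ, true_and]
    rw [← map_pow]
    congr 1
    calc c ^ q = c ^ Fintype.card k := by rw [hk]
    _ = c := FiniteField.pow_card c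
  have hScard : S.card ≤ q := by
    have hp : ((X : F[X]) ^ q - X) ≠ 0 := by
      intro h
      have := congrArg (fun p => Polynomial.coeff p q) h
      simp only [coeff_sub, coeff_X_pow_self, coeff_X, if_neg (by omega : ¬ (1 = q)),
        coeff_zero, sub_zero] at this
      norm_num at this
    calc S.card ≤ ((X : F[X]) ^ q - X).natDegree := by
          apply card_filter_le_natDegree _ _ hp
          intro w hw; simp [hw, sub_eq_zero]
      _ ≤ q := by
          apply le_trans (natDegree_sub_le _ _)
          simp [Nat.one_le_iff_ne_zero]
          omega
  have hST : T = S := Finset.eq_of_subset_of_card_le hTS (hTcard ▸ hScard)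
  have : w ∈ S := by simp [hS, hw]
  rw [← hST, hT] at this
  simp only [Finset.mem_image] at this
  obtain ⟨c, -, hc⟩ := this
  exact ⟨c, hc⟩





/-- f(x,y,z) = x(sτ² - tτ) + y(t - rτ²) + z(rτ - s), where (r,s,t) = (1, τ^{q²}, τ^{2q²}). -/
def fVal (k F : Type) [Field k] [Field F] [Algebra k F] (q : ℕ) (τ : F)
    (x y z : k) : F :=
  algebraMap k F x * (τ ^ (q ^ 2) * τ ^ 2 - τ ^ (2 * q ^ 2) * τ) +
  algebraMap k F y * (τ ^ (2 * q ^ 2) - 1 * τ ^ 2) +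
  algebraMap k F z * (1 * τ - τ ^ (q ^ 2))

/-- g(x,y,z) = x(tτ^q - sτ^{2q}) + y(rτ^{2q} - t) + z(s - rτ^q), with (r,s,t) as above. -/
def gVal (k F : Type) [Field k] [Field F] [Algebra k F] (q : ℕ) (τ : F)
    (x y z : k) : F :=
  algebraMap k F x * (τ ^ (2 * q ^ 2) * τ ^ q - τ ^ (q ^ 2) * τ ^ (2 * q)) +
  algebraMap k F y * (1 * τ ^ (2 * q) - τ ^ (2 * q ^ 2)) +
  algebraMap k F z * (τ ^ (q ^ 2) - 1 * τ ^ q)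

/-- for q even and P = (1, τ^{q²}, τ^{2q²}), the line joining any point
(x,y,z) of PG(2,q) to P meets ℓ = [-ττ^q, τ+τ^q, -1] in the point E + θE^q with
θ = f/g satisfying f^{q²} = g and θ^{q²+q+1} = 1 = -1; hence the projection of PG(2,q)
from P onto ℓ equals the exterior splash {E + θE^q : θ^{q²+q+1} = -1}. -/
theorem stmt19 (n q : ℕ) (hn : 0 < n) (hq : q = 2 ^ n)
    (k F : Type) [Field k] [Field F] [Algebra k F] [Fintype k] [Fintype F]
    (hk : Fintype.card k = q) (hF : Fintype.card F = q ^ 3)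
    (τ : F) (hdeg : (minpoly k τ).natDegree = 3) :
    (∀ x y z : k, ¬(x = 0 ∧ y = 0 ∧ z = 0) →
      (fVal k F q τ x y z) ^ (q ^ 2) = gVal k F q τ x y z ∧
      (fVal k F q τ x y z / gVal k F q τ x y z) ^ (q ^ 2 + q + 1) = 1 ∧
      (fVal k F q τ x y z / gVal k F q τ x y z) ^ (q ^ 2 + q + 1) = -1 ∧
      -- the point E + θE^q lies on ℓ = [-ττ^q, τ+τ^q, -1] ...
      (-(τ * τ ^ q) * (![1, τ, τ ^ 2] +
          (fVal k F q τ x y z / gVal k F q τ x y z) • ![1, τ ^ q, τ ^ (2 * q)]) 0 +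
        (τ + τ ^ q) * (![1, τ, τ ^ 2] +
          (fVal k F q τ x y z / gVal k F q τ x y z) • ![1, τ ^ q, τ ^ (2 * q)]) 1 -
        (![1, τ, τ ^ 2] +
          (fVal k F q τ x y z / gVal k F q τ x y z) • ![1, τ ^ q, τ ^ (2 * q)]) 2 = 0) ∧
      -- ... and on the line joining (x,y,z) to P = (1, τ^{q²}, τ^{2q²}):
      Matrix.det (Matrix.of
        ![(fun i => algebraMap k F (![x, y, z] i)),
          ![1, τ ^ (q ^ 2), τ ^ (2 * q ^ 2)],
          ![1, τ, τ ^ 2] +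
            (fVal k F q τ x y z / gVal k F q τ x y z) • ![1, τ ^ q, τ ^ (2 * q)]]) = 0) ∧
    -- the projection of PG(2,q) from P onto ℓ equals the exterior splash:
    {θ : F | ∃ x y z : k, ¬(x = 0 ∧ y = 0 ∧ z = 0) ∧
        θ = fVal k F q τ x y z / gVal k F q τ x y z} =
      {θ : F | θ ^ (q ^ 2 + q + 1) = -1} := by
  have hq2 : 2 ≤ q := by rw [hq]; exact Nat.one_lt_two_pow_iff.mpr (by omega)
  -- characteristic 2
  haveI hchar : CharP F 2 := by
    haveI := ringChar.charP F
    obtain ⟨m, hp, hcard⟩ := FiniteField.card F (ringChar F)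
    have h2 : ringChar F = 2 := by
      have hdvd : ringChar F ∣ 2 ^ (n * 3) := by
        have h1 : Fintype.card F = 2 ^ (n * 3) := by rw [hF, hq, ← pow_mul]
        rw [← h1, hcard]
        exact dvd_pow_self _ (by positivity)
      exact (Nat.prime_dvd_prime_iff_eq hp Nat.prime_two).mp (hp.dvd_of_dvd_pow hdvd)
    rw [← h2]; exact ringChar.charP F
  have hneg1 : (-1 : F) = 1 := by
    have := CharTwo.neg_eq (R := F) 1
    exact this
  -- frobenius additivity
  have hfrob : ∀ (e : ℕ) (a b : F), (a + b) ^ q ^ e = a ^ q ^ e + b ^ q ^ e := by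
    intro e a b
    rw [hq, ← pow_mul]
    exact add_pow_char_pow (p := 2) a b (n := n*e)
  have hfrobs : ∀ (e : ℕ) (a b : F), (a - b) ^ q ^ e = a ^ q ^ e - b ^ q ^ e := by
    intro e a b
    rw [hq, ← pow_mul]
    exact sub_pow_char_pow (p := 2) a b (n := n*e)
  -- pow_card
  have hF3 : ∀ a : F, a ^ q ^ 3 = a := by
    intro a; rw [← hF]; exact FiniteField.pow_card a
  have hkq : ∀ c : k, c ^ q = c := by
    intro c; rw [← hk]; exact FiniteField.pow_card c
  have hXq : ∀ c : k, (algebraMap k F c) ^ q = algebraMap k F c := by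
    intro c; rw [← map_pow, hkq]
  have hXq2 : ∀ c : k, (algebraMap k F c) ^ q ^ 2 = algebraMap k F c := by
    intro c; rw [pow_two, pow_mul, hXq, hXq]
  -- tau facts
  have hτk : ∀ c : k, τ ≠ algebraMap k F c := by
    intro c h
    rw [h, minpoly.eq_X_sub_C F c] at hdeg
    simp [Polynomial.natDegree_X_sub_C] at hdeg
  have hτfix : τ ^ q ≠ τ := by
    intro h
    obtain ⟨c, hc⟩ := fixedField k F q hq2 hk τ h
    exact hτk c hc.symm
  have hpow43 : ∀ a : F, a ^ (q ^ 4) = a ^ q := by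
    intro a
    calc a ^ q ^ 4 = (a ^ q ^ 3) ^ q := by rw [← pow_mul, ← pow_succ]
    _ = _ := by rw [hF3]
  have hτq2 : τ ^ q ^ 2 ≠ τ := by
    intro h
    apply hτfix
    have h2 : (τ ^ q ^ 2) ^ q = τ ^ q := by rw [h]
    rw [← pow_mul, ← pow_succ, hF3] at h2
    exact h2.symm
  have hτq2q : τ ^ q ^ 2 ≠ τ ^ q := by
    intro h
    apply hτq2
    have h2 : (τ ^ q ^ 2) ^ q = (τ ^ q) ^ q := by rw [h]
    rw [← pow_mul, ← pow_succ, hF3, ← pow_mul, ← pow_two] at h2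
    rw [← h2]
  -- factorization of f, injectivity
  have hsq : (τ ^ q ^ 2) ^ q = τ := by rw [← pow_mul, ← pow_succ, hF3]
  have hfactor : ∀ x y z : k, fVal k F q τ x y z =
      (τ - τ ^ q ^ 2) * (algebraMap k F x * (τ ^ q ^ 2 * τ)
        - algebraMap k F y * (τ ^ q ^ 2 + τ) + algebraMap k F z) := by
    intro x y z
    simp only [fVal]
    ring
  have hfrob1 : ∀ a b : F, (a + b) ^ q = a ^ q + b ^ q := by
    intro a b; have := hfrob 1 a b; simpa using this
  have hfrobs1 : ∀ a b : F, (a - b) ^ q = a ^ q - b ^ q := by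
    intro a b; have := hfrobs 1 a b; simpa using this
  have hf0 : ∀ x y z : k, fVal k F q τ x y z = 0 → x = 0 ∧ y = 0 ∧ z = 0 := by
    intro x y z hf
    rw [hfactor, mul_eq_zero, sub_eq_zero] at hf
    rcases hf with hf | hu0
    · exact absurd hf.symm hτq2
    have huq0 : algebraMap k F x * (τ * τ ^ q)
        - algebraMap k F y * (τ + τ ^ q) + algebraMap k F z = 0 := by
      have := congrArg (fun a => a ^ q) hu0
      simp only [zero_pow (by omega : q ≠ 0)] at this
      rw [hfrob1, hfrobs1, mul_pow, mul_pow, mul_pow, hfrob1, hXq, hXq, hXq, hsq] at this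
      rw [← this]
    have hkey : (τ ^ q ^ 2 - τ ^ q) * (algebraMap k F x * τ - algebraMap k F y) = 0 := by
      linear_combination hu0 - huq0
    rcases mul_eq_zero.mp hkey with h | h
    · exact absurd (sub_eq_zero.mp h) hτq2q
    rw [sub_eq_zero] at h
    have hx : x = 0 := by
      by_contra hx
      apply hτk (y * x⁻¹)
      have hX : algebraMap k F x ≠ 0 := by
        simpa using hx
      field_simp
      rw [mul_comm] at h
      rw [map_div₀, eq_div_iff hX, h]
    subst hx
    simp only [map_zero, zero_mul] at h
    have hy : y = 0 := by
      have := h.symm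
      rwa [map_eq_zero_iff _ (algebraMap k F).injective] at this
    subst hy
    simp only [map_zero, zero_mul, zero_sub, neg_zero, zero_add, zero_mul, sub_zero] at hu0
    have hz : z = 0 := by
      rwa [map_eq_zero_iff _ (algebraMap k F).injective] at hu0
    exact ⟨rfl, rfl, hz⟩
  -- f^{q^2} = g
  have hp1 : (τ ^ q ^ 2) ^ q ^ 2 = τ ^ q := by
    rw [← pow_mul, show q ^ 2 * q ^ 2 = q ^ 3 * q by ring, pow_mul, hF3]
  have hp2 : (τ ^ (2 * q ^ 2)) ^ q ^ 2 = τ ^ (2 * q) := by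
    rw [← pow_mul, show 2 * q ^ 2 * q ^ 2 = q ^ 3 * (2 * q) by ring, pow_mul, hF3]
  have hp3 : (τ ^ 2) ^ q ^ 2 = τ ^ (2 * q ^ 2) := by
    rw [← pow_mul, mul_comm]
  have hp4 : τ ^ q ^ 2 = τ ^ q ^ 2 := rfl
  have hfg : ∀ x y z : k, (fVal k F q τ x y z) ^ q ^ 2 = gVal k F q τ x y z := by
    intro x y z
    simp only [fVal, gVal, one_mul]
    rw [hfrob 2, hfrob 2, mul_pow, mul_pow, mul_pow, hfrobs 2, hfrobs 2, hfrobs 2,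
      mul_pow, mul_pow, hXq2, hXq2, hXq2, hp1, hp2, hp3]
    ring
  have main : (
    ∀ x y z : k, ¬(x = 0 ∧ y = 0 ∧ z = 0) →
      (fVal k F q τ x y z) ^ (q ^ 2) = gVal k F q τ x y z ∧
      (fVal k F q τ x y z / gVal k F q τ x y z) ^ (q ^ 2 + q + 1) = 1 ∧
      (fVal k F q τ x y z / gVal k F q τ x y z) ^ (q ^ 2 + q + 1) = -1 ∧
      (-(τ * τ ^ q) * (![1, τ, τ ^ 2] +
          (fVal k F q τ x y z / gVal k F q τ x y z) • ![1, τ ^ q, τ ^ (2 * q)]) 0 +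
        (τ + τ ^ q) * (![1, τ, τ ^ 2] +
          (fVal k F q τ x y z / gVal k F q τ x y z) • ![1, τ ^ q, τ ^ (2 * q)]) 1 -
        (![1, τ, τ ^ 2] +
          (fVal k F q τ x y z / gVal k F q τ x y z) • ![1, τ ^ q, τ ^ (2 * q)]) 2 = 0) ∧
      Matrix.det (Matrix.of
        ![(fun i => algebraMap k F (![x, y, z] i)),
          ![1, τ ^ (q ^ 2), τ ^ (2 * q ^ 2)],
          ![1, τ, τ ^ 2] +
            (fVal k F q τ x y z / gVal k F q τ x y z) • ![1, τ ^ q, τ ^ (2 * q)]]) = 0) := by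
    intro x y z hxyz
    have hfne : fVal k F q τ x y z ≠ 0 := fun h => hxyz (hf0 x y z h)
    have hgne : gVal k F q τ x y z ≠ 0 := by
      rw [← hfg x y z]
      exact pow_ne_zero _ hfne
    have hgm : (gVal k F q τ x y z) ^ (q ^ 2 + q + 1)
        = (fVal k F q τ x y z) ^ (q ^ 2 + q + 1) := by
      rw [← hfg x y z, ← pow_mul, show q ^ 2 * (q ^ 2 + q + 1) = q ^ 4 + q ^ 3 + q ^ 2 by ring,
        pow_add, pow_add, hpow43, hF3]
      ring
    have hθ1 : (fVal k F q τ x y z / gVal k F q τ x y z) ^ (q ^ 2 + q + 1) = 1 := by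
      rw [div_pow, hgm, div_self (pow_ne_zero _ hfne)]
    refine ⟨hfg x y z, hθ1, by rw [hneg1]; exact hθ1, ?_, ?_⟩
    · simp only [Pi.add_apply, Pi.smul_apply, Matrix.cons_val_zero, Matrix.cons_val_one,
        Matrix.head_cons, Matrix.cons_val_two, Matrix.tail_cons, smul_eq_mul]
      ring
    · have hθ : (fVal k F q τ x y z / gVal k F q τ x y z) * gVal k F q τ x y z
          = fVal k F q τ x y z := div_mul_cancel₀ _ hgne
      rw [Matrix.det_fin_three]
      simp only [Matrix.of_apply, Matrix.cons_val', Matrix.cons_val_zero, Matrix.empty_val',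
        Matrix.cons_val_fin_one, Matrix.cons_val_one, Matrix.head_cons, Matrix.head_fin_const,
        Matrix.cons_val_two, Matrix.tail_cons, Pi.add_apply, Pi.smul_apply, smul_eq_mul,
        Matrix.head_val']
      simp only [fVal, gVal] at hθ ⊢
      linear_combination -hθ
  refine ⟨main, ?_⟩
  classical
  -- surjectivity of the linear map (x,y,z) ↦ fVal
  have hsub : ∀ x y z x' y' z' : k, fVal k F q τ x y z - fVal k F q τ x' y' z'
      = fVal k F q τ (x - x') (y - y') (z - z') := by
    intros
    simp only [fVal, map_sub]
    ring
  have hψbij : Function.Bijective (fun p : k × k × k => fVal k F q τ p.1 p.2.1 p.2.2) := by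
    rw [Fintype.bijective_iff_injective_and_card]
    constructor
    · intro a b h
      simp only at h
      have h0 : fVal k F q τ (a.1 - b.1) (a.2.1 - b.2.1) (a.2.2 - b.2.2) = 0 := by
        rw [← hsub, h, sub_self]
      obtain ⟨h1, h2, h3⟩ := hf0 _ _ _ h0
      rw [sub_eq_zero] at h1 h2 h3
      exact Prod.ext h1 (Prod.ext h2 h3)
    · simp only [Fintype.card_prod, hk, hF]
      ring
  -- the unit group homomorphism w ↦ w^{1-q²}
  set e : Fˣ →* Fˣ := zpowGroupHom (1 - (q : ℤ) ^ 2) with he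
  have heval : ∀ w : Fˣ, ((e w : F)) = (w : F) / ((w : F)) ^ (q ^ 2) := by
    intro w
    rw [he]
    show ((w ^ (1 - (q : ℤ) ^ 2) : Fˣ) : F) = _
    rw [Units.val_zpow_eq_zpow_val, zpow_sub₀ (Units.ne_zero w), zpow_one]
    congr 1
    rw [show ((q : ℤ) ^ 2) = ((q ^ 2 : ℕ) : ℤ) by push_cast; ring, zpow_natCast]
  -- kernel = image of kˣ
  have hker : e.ker = (Units.map (algebraMap k F : k →* F)).range := by
    ext w
    constructor
    · intro hw
      rw [MonoidHom.mem_ker] at hw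
      have h1 : (w : F) / ((w : F)) ^ (q ^ 2) = 1 := by
        rw [← heval, hw, Units.val_one]
      have h2 : ((w : F)) ^ (q ^ 2) = (w : F) := by
        field_simp at h1
        exact h1.symm
      have h3 : ((w : F)) ^ q = (w : F) := by
        have h4 : (((w : F)) ^ (q ^ 2)) ^ (q ^ 2) = (w : F) ^ (q ^ 2) := by conv_lhs => rw [h2]
        rw [← pow_mul, show q ^ 2 * q ^ 2 = q ^ 3 * q by ring, pow_mul, hF3] at h4
        rw [h4, h2]
      obtain ⟨c, hc⟩ := fixedField k F q hq2 hk _ h3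
      have hc0 : c ≠ 0 := by
        intro h
        rw [h, map_zero] at hc
        exact Units.ne_zero w hc.symm
      refine ⟨Units.mk0 c hc0, ?_⟩
      ext
      simpa using hc
    · rintro ⟨u, rfl⟩
      rw [MonoidHom.mem_ker]
      ext
      rw [heval]
      have : ((Units.map (algebraMap k F : k →* F) u : Fˣ) : F) = algebraMap k F (u : k) := rfl
      rw [this, Units.val_one, hXq2]
      exact div_self (by simpa using u.ne_zero)
  -- cardinality of the kernel
  have hφinj : Function.Injective (Units.map (algebraMap k F : k →* F)) :=
    Units.map_injective (algebraMap k F).injective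
  have hcardker : Nat.card e.ker = q - 1 := by
    rw [hker]
    have hcoe : ((Units.map (algebraMap k F : k →* F)).range : Set Fˣ)
        = Set.range (Units.map (algebraMap k F : k →* F)) := MonoidHom.coe_range _
    calc Nat.card (Units.map (algebraMap k F : k →* F)).range
        = Nat.card (Set.range (Units.map (algebraMap k F : k →* F))) :=
          Nat.card_congr (Equiv.setCongr hcoe)
      _ = Nat.card kˣ := Nat.card_range_of_injective hφinj
      _ = q - 1 := by rw [Nat.card_eq_fintype_card, Fintype.card_units, hk]
  have hcardF : Nat.card Fˣ = q ^ 3 - 1 := by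
    rw [Nat.card_eq_fintype_card, Fintype.card_units, hF]
  have hmul : Nat.card e.range * (q - 1) = q ^ 3 - 1 := by
    rw [← hcardker, ← hcardF, Subgroup.card_eq_card_quotient_mul_card_subgroup e.ker]
    congr 1
    exact (Nat.card_congr (QuotientGroup.quotientKerEquivRange e).toEquiv).symm
  have harith : (q ^ 2 + q + 1) * (q - 1) = q ^ 3 - 1 := by
    have h1 : 1 ≤ q := by omega
    have h3 : 1 ≤ q ^ 3 := Nat.one_le_pow _ _ (by omega)
    zify [h1, h3]
    ring
  have hcardrange : Nat.card e.range = q ^ 2 + q + 1 :=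
    Nat.eq_of_mul_eq_mul_right (by omega) (hmul.trans harith.symm)
  -- norm-1 identity
  have hnorm : ∀ a : F, a ≠ 0 → (a / a ^ (q ^ 2)) ^ (q ^ 2 + q + 1) = 1 := by
    intro a ha
    have hden : (a ^ (q ^ 2)) ^ (q ^ 2 + q + 1) = a ^ q * a * a ^ (q ^ 2) := by
      rw [← pow_mul, show q ^ 2 * (q ^ 2 + q + 1) = q ^ 4 + q ^ 3 + q ^ 2 by ring,
        pow_add, pow_add, hpow43, hF3]
    rw [div_pow, hden,
      div_eq_one_iff_eq (mul_ne_zero (mul_ne_zero (pow_ne_zero _ ha) ha) (pow_ne_zero _ ha))]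
    ring
  -- the image set equals the norm-one set
  have hAB : ((fun u : Fˣ => (u : F)) '' ((e.range : Set Fˣ)))
      = {θ : F | θ ^ (q ^ 2 + q + 1) = 1} := by
    apply Set.eq_of_subset_of_ncard_le
    · rintro _ ⟨u, hu, rfl⟩
      obtain ⟨w, rfl⟩ := MonoidHom.mem_range.mp hu
      simp only [Set.mem_setOf_eq]
      rw [heval]
      exact hnorm _ (Units.ne_zero w)
    · have hAcard : ((fun u : Fˣ => (u : F)) '' ((e.range : Set Fˣ))).ncard
          = q ^ 2 + q + 1 := by
        rw [Set.ncard_image_of_injective _ Units.val_injective, ← Nat.card_coe_set_eq]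
        rw [SetLike.coe_sort_coe]
        exact hcardrange
      rw [hAcard]
      have hBeq : {θ : F | θ ^ (q ^ 2 + q + 1) = 1}
          = ↑(Finset.univ.filter (fun θ : F => θ ^ (q ^ 2 + q + 1) = 1)) := by
        ext θ; simp
      rw [hBeq, Set.ncard_coe_finset]
      have hpne : ((X : F[X]) ^ (q ^ 2 + q + 1) - 1) ≠ 0 := by
        intro h
        have := congrArg (fun p => Polynomial.coeff p 0) h
        simp only [coeff_sub, coeff_X_pow, if_neg (by omega : ¬ (q ^ 2 + q + 1 = 0)),
          coeff_one, coeff_zero] at this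
        norm_num at this
      calc (Finset.univ.filter (fun θ : F => θ ^ (q ^ 2 + q + 1) = 1)).card
          ≤ ((X : F[X]) ^ (q ^ 2 + q + 1) - 1).natDegree := by
            apply card_filter_le_natDegree _ _ hpne
            intro w hw; simp [hw, sub_eq_zero]
        _ ≤ q ^ 2 + q + 1 := by
            apply le_trans (natDegree_sub_le _ _)
            simp
    · exact Set.toFinite _
  -- conclude
  ext θ
  simp only [Set.mem_setOf_eq]
  constructor
  · rintro ⟨x, y, z, hxyz, rfl⟩
    exact (main x y z hxyz).2.2.1
  · intro hθm
    rw [hneg1] at hθm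
    have : θ ∈ ((fun u : Fˣ => (u : F)) '' ((e.range : Set Fˣ))) := by
      rw [hAB]; exact hθm
    obtain ⟨u, hu, rfl⟩ := this
    obtain ⟨w, rfl⟩ := MonoidHom.mem_range.mp hu
    obtain ⟨⟨x, y, z⟩, hxyz⟩ := hψbij.2 (w : F)
    simp only at hxyz
    refine ⟨x, y, z, ?_, ?_⟩
    · rintro ⟨rfl, rfl, rfl⟩
      simp only [fVal, map_zero, zero_mul, add_zero, zero_add] at hxyz
      exact Units.ne_zero w hxyz.symm
    · show ((e w : Fˣ) : F) = fVal k F q τ x y z / gVal k F q τ x y z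
      rw [heval w, ← hxyz, hfg]
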